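/- There exists a finite constant C such that for every α > 0 and all Lebesgue measurable sets E, F ⊂ ℝ², ∫_{ℝ²} ∫_{ℝ²} χ_{{|s₁t₂ − s₂t₁| ≤ α}}(s,t) · χ_E(s) χ_F(t) ds dt ≤ C α |E|^{1/2} |F|^{1/2}. -/

import Mathlib

open MeasureTheory Set Matrix
open scoped ENNReal NNReal

lemma strip_vol (w : EuclideanSpace ℝ (Fin 2)) (hw : w ≠ 0) {β R : ℝ} (hβ : 0 ≤ β) (hR : 0 ≤ R) :
    volume {t : EuclideanSpace ℝ (Fin 2) | |w 0 * t 1 - w 1 * t 0| ≤ β ∧ ‖t‖ < R}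
      ≤ ENNReal.ofReal (4 * β * R / ‖w‖) := by
  have hwn : 0 < ‖w‖ := norm_pos_iff.mpr hw
  set M : Matrix (Fin 2) (Fin 2) ℝ := !![-(w 1), w 0; w 0, w 1] with hM
  set L : EuclideanSpace ℝ (Fin 2) →ₗ[ℝ] EuclideanSpace ℝ (Fin 2) := Matrix.toEuclideanLin M with hL
  have hdet : LinearMap.det L = -(‖w‖^2) := by
    have : LinearMap.det L = M.det := by
      rw [hL, Matrix.toEuclideanLin_eq_toLin, LinearMap.det_toLin]
    rw [this, hM]
    simp [Matrix.det_fin_two]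
    rw [EuclideanSpace.norm_eq]
    rw [Real.sq_sqrt (by positivity)]
    simp [Fin.sum_univ_two]
    ring
  have hdet0 : LinearMap.det L ≠ 0 := by
    rw [hdet, neg_ne_zero]; positivity
  have hL0 : ∀ t : EuclideanSpace ℝ (Fin 2), (L t) 0 = -(w 1) * t 0 + w 0 * t 1 := by
    intro t
    show (M *ᵥ (WithLp.equiv 2 (Fin 2 → ℝ) t)) 0 = _
    simp [hM, Matrix.mulVec, dotProduct, Fin.sum_univ_two, Matrix.vecHead, Matrix.vecTail]
  have hL1 : ∀ t : EuclideanSpace ℝ (Fin 2), (L t) 1 = w 0 * t 0 + w 1 * t 1 := by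
    intro t
    show (M *ᵥ (WithLp.equiv 2 (Fin 2 → ℝ) t)) 1 = _
    simp [hM, Matrix.mulVec, dotProduct, Fin.sum_univ_two, Matrix.vecHead, Matrix.vecTail]
  set Rect : Set (EuclideanSpace ℝ (Fin 2)) := {u | |u 0| ≤ β ∧ |u 1| ≤ ‖w‖ * R} with hRect
  have hsub : {t : EuclideanSpace ℝ (Fin 2) | |w 0 * t 1 - w 1 * t 0| ≤ β ∧ ‖t‖ < R}
      ⊆ L ⁻¹' Rect := by
    rintro t ⟨h1, h2⟩
    constructor
    · rw [hL0]; calc |(-(w 1) * t 0 + w 0 * t 1)| = |w 0 * t 1 - w 1 * t 0| := by ring_nf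
        _ ≤ β := h1
    · rw [hL1]
      have : w 0 * t 0 + w 1 * t 1 = inner ℝ w t := by
        rw [PiLp.inner_apply]; simp [Fin.sum_univ_two]; ring
      rw [this]
      calc |(inner ℝ w t : ℝ)| ≤ ‖w‖ * ‖t‖ := abs_real_inner_le_norm w t
        _ ≤ ‖w‖ * R := by nlinarith
  have hRectVol : volume Rect = ENNReal.ofReal (2*β) * ENNReal.ofReal (2*(‖w‖*R)) := by
    have : Rect = (MeasurableEquiv.toLp 2 (Fin 2 → ℝ)).symm ⁻¹'
        ((univ : Set (Fin 2)).pi fun i => Icc (-(![β, ‖w‖*R] i)) (![β, ‖w‖*R] i)) := by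
      ext u
      simp only [hRect, mem_setOf_eq, mem_preimage, mem_pi, mem_univ, forall_true_left, mem_Icc]
      constructor
      · rintro ⟨h1, h2⟩ i
        fin_cases i <;>
          simp [MeasurableEquiv.coe_toLp_symm, abs_le.mp h1, abs_le.mp h2]
      · intro h
        refine ⟨abs_le.mpr ?_, abs_le.mpr ?_⟩
        · have := h 0; simpa [MeasurableEquiv.coe_toLp_symm] using this
        · have := h 1; simpa [MeasurableEquiv.coe_toLp_symm] using this
    rw [this, (EuclideanSpace.volume_preserving_symm_measurableEquiv_toLp (Fin 2)).measure_preimage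
        (by measurability)]
    rw [volume_pi_pi]
    rw [Fin.prod_univ_two]
    simp only [Real.volume_Icc, Matrix.cons_val_zero, Matrix.cons_val_one, Matrix.head_cons, sub_neg_eq_add]
    congr 1 <;> [skip; skip] <;> rw [ENNReal.ofReal_eq_ofReal_iff] <;> try ring
    all_goals positivity
  calc volume {t : EuclideanSpace ℝ (Fin 2) | |w 0 * t 1 - w 1 * t 0| ≤ β ∧ ‖t‖ < R}
      ≤ volume (L ⁻¹' Rect) := measure_mono hsub
    _ = ENNReal.ofReal |(LinearMap.det L)⁻¹| * volume Rect := by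
        rw [Measure.addHaar_preimage_linearMap volume hdet0]
    _ ≤ ENNReal.ofReal (4 * β * R / ‖w‖) := by
        rw [hRectVol, hdet]
        rw [← ENNReal.ofReal_mul (by positivity), ← ENNReal.ofReal_mul (by positivity)]
        apply ENNReal.ofReal_le_ofReal
        rw [abs_inv, abs_neg, abs_of_nonneg (by positivity : (0:ℝ) ≤ ‖w‖^2)]
        have h0 : ‖w‖ ≠ 0 := hwn.ne'
        apply le_of_eq
        field_simp
        ring

lemma zsum_le (n : ℤ) : (∑' k : ℤ, (if k ≤ n then (2:ℝ≥0∞)^k else 0)) = 2^(n+1) := by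
  have h2 : (2:ℝ≥0∞) ≠ 0 := two_ne_zero
  have h2' : (2:ℝ≥0∞) ≠ ∞ := ENNReal.ofNat_ne_top
  rw [← (Equiv.addLeft n).tsum_eq (fun k : ℤ => (if k ≤ n then (2:ℝ≥0∞)^k else 0))]
  simp only [Equiv.coe_addLeft]
  rw [tsum_of_nat_of_neg_add_one ENNReal.summable ENNReal.summable]
  have e1 : (∑' m : ℕ, (if n + (m:ℤ) ≤ n then (2:ℝ≥0∞)^(n + (m:ℤ)) else 0)) = 2^n := by
    rw [tsum_eq_single 0 (by intro m hm; rw [if_neg (by omega)])]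
    simp
  have e2 : (∑' m : ℕ, (if n + (-(m+1):ℤ) ≤ n then (2:ℝ≥0∞)^(n + (-(m+1):ℤ)) else 0)) = 2^n := by
    have : ∀ m : ℕ, (if n + (-(m+1):ℤ) ≤ n then (2:ℝ≥0∞)^(n + (-(m+1):ℤ)) else 0)
        = 2^n * 2⁻¹ * (2⁻¹)^(m:ℕ) := by
      intro m
      rw [if_pos (by omega)]
      rw [show n + (-(m+1):ℤ) = n + (-1) + (-(m:ℤ)) by ring]
      rw [ENNReal.zpow_add h2 h2', ENNReal.zpow_add h2 h2']
      congr 1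
      · congr 1
        simp [ENNReal.zpow_neg]
      · rw [ENNReal.zpow_neg]
        rw [← ENNReal.inv_pow]
        norm_cast
    simp only [this]
    rw [ENNReal.tsum_mul_left, ENNReal.tsum_geometric, ENNReal.one_sub_inv_two, inv_inv]
    rw [mul_assoc]
    rw [ENNReal.inv_mul_cancel h2 h2', mul_one]
  erw [e1, e2, ENNReal.zpow_add h2 h2']
  rw [zpow_one]
  ring
lemma zsum_ge (n : ℤ) : (∑' k : ℤ, (if n ≤ k then (2:ℝ≥0∞)^(-k) else 0)) = 2^(-n+1) := by
  rw [← (Equiv.neg ℤ).tsum_eq (fun k : ℤ => (if n ≤ k then (2:ℝ≥0∞)^(-k) else 0))]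
  simp only [Equiv.neg_apply, neg_neg]
  rw [← zsum_le (-n)]
  congr 1; ext k
  congr 1
  simp only [eq_iff_iff]
  omega

noncomputable def Ann (j : ℤ) : Set (EuclideanSpace ℝ (Fin 2)) :=
  {x | (2:ℝ)^j ≤ ‖x‖ ∧ ‖x‖ < 2^(j+1)}

lemma Ann_meas (j : ℤ) : MeasurableSet (Ann j) := by
  have : Ann j = (fun x : EuclideanSpace ℝ (Fin 2) => ‖x‖) ⁻¹' (Ico ((2:ℝ)^j) (2^(j+1))) := rfl
  rw [this]
  exact measurable_norm measurableSet_Ico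

lemma Ann_disj : Pairwise (Function.onFun Disjoint Ann) := by
  intro j k hjk
  rw [Function.onFun, Set.disjoint_left]
  rintro x ⟨hj1, hj2⟩ ⟨hk1, hk2⟩
  rcases lt_or_gt_of_ne hjk with h | h
  · have : (2:ℝ)^(j+1) ≤ 2^k := zpow_le_zpow_right₀ one_le_two (by omega)
    linarith
  · have : (2:ℝ)^(k+1) ≤ 2^j := zpow_le_zpow_right₀ one_le_two (by omega)
    linarith

lemma Ann_cover (x : EuclideanSpace ℝ (Fin 2)) (hx : x ≠ 0) : ∃ j : ℤ, x ∈ Ann j := by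
  obtain ⟨n, hn⟩ := exists_mem_Ico_zpow (norm_pos_iff.mpr hx) (one_lt_two (α := ℝ))
  exact ⟨n, hn.1, hn.2⟩

lemma Ann_norm_pos {j : ℤ} {x : EuclideanSpace ℝ (Fin 2)} (hx : x ∈ Ann j) : x ≠ 0 := by
  intro h
  have := hx.1
  rw [h] at this
  simp at this
  have : (0:ℝ) < 2^j := zpow_pos two_pos j
  linarith [hx.1, this]

lemma ofReal_two_zpow (m : ℤ) : ENNReal.ofReal ((2:ℝ)^m) = (2:ℝ≥0∞)^m := by
  rcases m with m | m
  · rw [Int.ofNat_eq_coe, zpow_natCast, zpow_natCast, ENNReal.ofReal_pow (by norm_num)]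
    norm_num
  · rw [zpow_negSucc, zpow_negSucc, ENNReal.ofReal_inv_of_pos (by positivity),
      ENNReal.ofReal_pow (by norm_num)]
    norm_num

lemma sq_half (x : ℝ≥0∞) : (x * x)^(1/2:ℝ) = x := by
  rw [← sq, ← ENNReal.rpow_natCast, ← ENNReal.rpow_mul]
  norm_num

lemma two_zpow_mul (m l : ℤ) : (2:ℝ≥0∞)^m * 2^l = 2^(m+l) :=
  (ENNReal.zpow_add two_ne_zero ENNReal.ofNat_ne_top m l).symm


/-- the determinant sublevel set functional bound in `ℝ²`. -/
theorem statement12 :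
    ∃ C : ℝ, 0 ≤ C ∧ ∀ α : ℝ, 0 < α →
      ∀ E F : Set (EuclideanSpace ℝ (Fin 2)), MeasurableSet E → MeasurableSet F →
      (∫⁻ s, ∫⁻ t,
          ({q : EuclideanSpace ℝ (Fin 2) × EuclideanSpace ℝ (Fin 2) |
              |q.1 0 * q.2 1 - q.1 1 * q.2 0| ≤ α}.indicator (fun _ => (1 : ℝ≥0∞)) (s, t))
            * E.indicator (fun _ => (1 : ℝ≥0∞)) s * F.indicator (fun _ => (1 : ℝ≥0∞)) t)
        ≤ ENNReal.ofReal (C * α) * (volume E) ^ (1/2 : ℝ) * (volume F) ^ (1/2 : ℝ) := by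
  classical
  refine ⟨32, by norm_num, ?_⟩
  intro α hα E F hE hF
  set μ : Measure (EuclideanSpace ℝ (Fin 2)) := volume with hμ
  set S : Set ((EuclideanSpace ℝ (Fin 2)) × (EuclideanSpace ℝ (Fin 2))) :=
    {q | |q.1 0 * q.2 1 - q.1 1 * q.2 0| ≤ α} with hS
  have hSmeas : MeasurableSet S := by
    have hc : Continuous (fun q : (EuclideanSpace ℝ (Fin 2)) × (EuclideanSpace ℝ (Fin 2)) =>
        |q.1 0 * q.2 1 - q.1 1 * q.2 0|) := by fun_prop
    have : S = (fun q : (EuclideanSpace ℝ (Fin 2)) × (EuclideanSpace ℝ (Fin 2)) =>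
        |q.1 0 * q.2 1 - q.1 1 * q.2 0|) ⁻¹' (Iic α) := rfl
    rw [this]
    exact hc.measurable measurableSet_Iic
  set K : Set ((EuclideanSpace ℝ (Fin 2)) × (EuclideanSpace ℝ (Fin 2))) := S ∩ E ×ˢ F with hK
  have hKmeas : MeasurableSet K := hSmeas.inter (hE.prod hF)
  have hLHS : (∫⁻ s, ∫⁻ t,
      (S.indicator (fun _ => (1 : ℝ≥0∞)) (s, t))
        * E.indicator (fun _ => (1 : ℝ≥0∞)) s * F.indicator (fun _ => (1 : ℝ≥0∞)) t)
      = (μ.prod μ) K := by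
    rw [Measure.prod_apply hKmeas]
    apply lintegral_congr
    intro s
    have hpt : ∀ t, (S.indicator (fun _ => (1 : ℝ≥0∞)) (s, t))
        * E.indicator (fun _ => (1 : ℝ≥0∞)) s * F.indicator (fun _ => (1 : ℝ≥0∞)) t
        = (Prod.mk s ⁻¹' K).indicator (fun _ => (1:ℝ≥0∞)) t := by
      intro t
      simp only [indicator_apply, mem_preimage, hK, mem_inter_iff, mem_prod]
      by_cases h1 : (s, t) ∈ S <;> by_cases h2 : s ∈ E <;> by_cases h3 : t ∈ F <;>
        simp [h1, h2, h3]
    simp_rw [hpt]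
    rw [lintegral_indicator_const (measurable_prodMk_left hKmeas) 1, one_mul]
  rw [hLHS]
  by_cases hA0 : μ E = 0
  · have hz : (μ.prod μ) K = 0 := by
      apply le_antisymm _ zero_le
      calc (μ.prod μ) K ≤ (μ.prod μ) (E ×ˢ (univ : Set (EuclideanSpace ℝ (Fin 2)))) :=
            measure_mono (fun q hq => ⟨hq.2.1, trivial⟩)
        _ = 0 := by rw [Measure.prod_prod, hA0, zero_mul]
    rw [hz]; exact zero_le
  by_cases hB0 : μ F = 0
  · have hz : (μ.prod μ) K = 0 := by
      apply le_antisymm _ zero_le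
      calc (μ.prod μ) K ≤ (μ.prod μ) ((univ : Set (EuclideanSpace ℝ (Fin 2))) ×ˢ F) :=
            measure_mono (fun q hq => ⟨trivial, hq.2.2⟩)
        _ = 0 := by rw [Measure.prod_prod, hB0, mul_zero]
    rw [hz]; exact zero_le
  have hofReal_pos : ENNReal.ofReal (32 * α) ≠ 0 := by
    simp only [ne_eq, ENNReal.ofReal_eq_zero, not_le]
    linarith
  by_cases hAtop : μ E = ∞
  · have : ENNReal.ofReal (32 * α) * (μ E) ^ (1/2 : ℝ) * (μ F) ^ (1/2 : ℝ) = ∞ := by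
      rw [hAtop, ENNReal.top_rpow_of_pos (by norm_num), ENNReal.mul_top hofReal_pos,
        ENNReal.top_mul]
      simp only [ne_eq, ENNReal.rpow_eq_zero_iff, not_or, not_and, not_lt]
      constructor
      · intro h; exact absurd h hB0
      · intro h; norm_num
    rw [this]; exact le_top
  by_cases hBtop : μ F = ∞
  · have : ENNReal.ofReal (32 * α) * (μ E) ^ (1/2 : ℝ) * (μ F) ^ (1/2 : ℝ) = ∞ := by
      rw [hBtop, ENNReal.top_rpow_of_pos (by norm_num), ENNReal.mul_top]
      simp only [ne_eq, mul_eq_zero, not_or]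
      exact ⟨hofReal_pos, by
        simp only [ne_eq, ENNReal.rpow_eq_zero_iff, not_or, not_and, not_lt]
        exact ⟨fun h => absurd h hA0, fun h => by norm_num⟩⟩
    rw [this]; exact le_top
  -- main case: 0 < μ E < ∞, 0 < μ F < ∞
  obtain ⟨m, hm⟩ := ENNReal.exists_mem_Ico_zpow
    (x := μ F / μ E) (y := 2)
    (by simp [ENNReal.div_eq_zero_iff, hB0, hAtop])
    (by simp [ENNReal.div_eq_top, hBtop, hA0])
    ENNReal.one_lt_two ENNReal.ofNat_ne_top
  obtain ⟨n, hn⟩ := Int.even_or_odd' m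
  have key1 : (2:ℝ≥0∞)^(2*n) * μ E ≤ μ F := by
    have h1 : (2:ℝ≥0∞)^(2*n) ≤ μ F / μ E := by
      refine le_trans (ENNReal.zpow_le_of_le one_le_two ?_) hm.1
      omega
    calc (2:ℝ≥0∞)^(2*n) * μ E ≤ (μ F / μ E) * μ E := mul_le_mul_left h1 _
      _ = μ F := ENNReal.div_mul_cancel hA0 hAtop
  have key2 : μ F ≤ (2:ℝ≥0∞)^(2*n+2) * μ E := by
    have h1 : μ F / μ E ≤ (2:ℝ≥0∞)^(2*n+2) := by
      refine le_trans hm.2.le (ENNReal.zpow_le_of_le one_le_two ?_)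
      omega
    calc μ F = (μ F / μ E) * μ E := (ENNReal.div_mul_cancel hA0 hAtop).symm
      _ ≤ (2:ℝ≥0∞)^(2*n+2) * μ E := mul_le_mul_left h1 _
  -- covering by annuli
  have hsum : (μ.prod μ) K ≤ ∑' p : ℤ × ℤ, (μ.prod μ) (K ∩ (Ann p.1 ×ˢ Ann p.2)) := by
    have hcov : K ⊆ (⋃ p : ℤ × ℤ, K ∩ (Ann p.1 ×ˢ Ann p.2)) ∪
        ((({(0 : EuclideanSpace ℝ (Fin 2))} : Set (EuclideanSpace ℝ (Fin 2))) ×ˢ univ) ∪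
          (univ ×ˢ ({(0 : EuclideanSpace ℝ (Fin 2))} : Set (EuclideanSpace ℝ (Fin 2))))) := by
      intro q hq
      by_cases h1 : q.1 = 0
      · exact Or.inr (Or.inl ⟨h1, trivial⟩)
      by_cases h2 : q.2 = 0
      · exact Or.inr (Or.inr ⟨trivial, h2⟩)
      obtain ⟨j, hj⟩ := Ann_cover q.1 h1
      obtain ⟨k, hk⟩ := Ann_cover q.2 h2
      exact Or.inl (mem_iUnion.mpr ⟨(j, k), hq, hj, hk⟩)
    have hnull : (μ.prod μ)
        ((({(0 : EuclideanSpace ℝ (Fin 2))} : Set (EuclideanSpace ℝ (Fin 2))) ×ˢ univ) ∪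
          (univ ×ˢ ({(0 : EuclideanSpace ℝ (Fin 2))} : Set (EuclideanSpace ℝ (Fin 2))))) = 0 := by
      apply le_antisymm _ zero_le
      refine le_trans (measure_union_le _ _) ?_
      rw [Measure.prod_prod, Measure.prod_prod, measure_singleton, zero_mul, mul_zero,
        add_zero]
    calc (μ.prod μ) K ≤ (μ.prod μ) ((⋃ p : ℤ × ℤ, K ∩ (Ann p.1 ×ˢ Ann p.2)) ∪ _) :=
          measure_mono hcov
      _ ≤ (μ.prod μ) (⋃ p : ℤ × ℤ, K ∩ (Ann p.1 ×ˢ Ann p.2)) + 0 := by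
          refine le_trans (measure_union_le _ _) ?_
          rw [hnull]
      _ = (μ.prod μ) (⋃ p : ℤ × ℤ, K ∩ (Ann p.1 ×ˢ Ann p.2)) := add_zero _
      _ ≤ ∑' p : ℤ × ℤ, (μ.prod μ) (K ∩ (Ann p.1 ×ˢ Ann p.2)) := measure_iUnion_le _
  -- bound 1 on pieces
  have hT1 : ∀ j k : ℤ, (μ.prod μ) (K ∩ (Ann j ×ˢ Ann k))
      ≤ ENNReal.ofReal α * 2^(k - j + 3) * μ (E ∩ Ann j) := by
    intro j k
    rw [Measure.prod_apply (hKmeas.inter ((Ann_meas j).prod (Ann_meas k)))]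
    have hpt : ∀ s, μ (Prod.mk s ⁻¹' (K ∩ (Ann j ×ˢ Ann k)))
        ≤ (E ∩ Ann j).indicator (fun _ => ENNReal.ofReal α * 2^(k - j + 3)) s := by
      intro s
      by_cases hs : s ∈ E ∩ Ann j
      · rw [indicator_of_mem hs]
        have hsub : Prod.mk s ⁻¹' (K ∩ (Ann j ×ˢ Ann k))
            ⊆ {t : EuclideanSpace ℝ (Fin 2) | |s 0 * t 1 - s 1 * t 0| ≤ α ∧ ‖t‖ < 2^(k+1)} := by
          rintro t ⟨⟨hdet, _, _⟩, _, hkt⟩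
          exact ⟨hdet, hkt.2⟩
        refine le_trans (measure_mono hsub)
          (le_trans (strip_vol s (Ann_norm_pos hs.2) hα.le (by positivity)) ?_)
        rw [← ofReal_two_zpow, ← ENNReal.ofReal_mul hα.le]
        apply ENNReal.ofReal_le_ofReal
        have h1 : (2:ℝ)^j ≤ ‖s‖ := hs.2.1
        have h2 : (0:ℝ) < ‖s‖ := lt_of_lt_of_le (zpow_pos two_pos j) h1
        rw [div_le_iff₀ h2]
        have he : α * 2^(k - j + 3) * 2^j = 4 * α * (2:ℝ)^(k+1) := by
              rw [mul_assoc, ← zpow_add₀ (two_ne_zero (α := ℝ)),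
                show k - j + 3 + j = (k+1) + 2 by ring, zpow_add₀ (two_ne_zero (α := ℝ)),
                show ((2:ℝ))^(2:ℤ) = 4 by norm_num]
              ring
        calc 4 * α * (2:ℝ)^(k+1) ≤ α * 2^(k - j + 3) * 2^j := le_of_eq he.symm
          _ ≤ α * 2^(k - j + 3) * ‖s‖ := by
              have hp : (0:ℝ) < α * 2^(k - j + 3) := by positivity
              nlinarith
      · rw [indicator_of_notMem hs]
        have hempty : Prod.mk s ⁻¹' (K ∩ (Ann j ×ˢ Ann k)) = ∅ := by
          ext t
          simp only [mem_preimage, mem_inter_iff, mem_empty_iff_false, iff_false, not_and]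
          rintro ⟨_, hsE, _⟩ ⟨hsA, _⟩
          exact hs ⟨hsE, hsA⟩
        rw [hempty, measure_empty]
    calc (∫⁻ s, μ (Prod.mk s ⁻¹' (K ∩ (Ann j ×ˢ Ann k))) ∂μ)
        ≤ ∫⁻ s, (E ∩ Ann j).indicator (fun _ => ENNReal.ofReal α * 2^(k - j + 3)) s ∂μ :=
          lintegral_mono hpt
      _ = ENNReal.ofReal α * 2^(k - j + 3) * μ (E ∩ Ann j) :=
          lintegral_indicator_const (hE.inter (Ann_meas j)) _
  -- bound 2 on pieces
  have hT2 : ∀ j k : ℤ, (μ.prod μ) (K ∩ (Ann j ×ˢ Ann k))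
      ≤ ENNReal.ofReal α * 2^(j - k + 3) * μ (F ∩ Ann k) := by
    intro j k
    rw [Measure.prod_apply_symm (hKmeas.inter ((Ann_meas j).prod (Ann_meas k)))]
    have hpt : ∀ t, μ ((fun s => (s, t)) ⁻¹' (K ∩ (Ann j ×ˢ Ann k)))
        ≤ (F ∩ Ann k).indicator (fun _ => ENNReal.ofReal α * 2^(j - k + 3)) t := by
      intro t
      by_cases ht : t ∈ F ∩ Ann k
      · rw [indicator_of_mem ht]
        have hsub : (fun s => (s, t)) ⁻¹' (K ∩ (Ann j ×ˢ Ann k))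
            ⊆ {u : EuclideanSpace ℝ (Fin 2) | |t 0 * u 1 - t 1 * u 0| ≤ α ∧ ‖u‖ < 2^(j+1)} := by
          rintro u ⟨⟨hdet, _, _⟩, hju, _⟩
          refine ⟨?_, hju.2⟩
          rw [show t 0 * u 1 - t 1 * u 0 = -(u 0 * t 1 - u 1 * t 0) by ring, abs_neg]
          exact hdet
        refine le_trans (measure_mono hsub)
          (le_trans (strip_vol t (Ann_norm_pos ht.2) hα.le (by positivity)) ?_)
        rw [← ofReal_two_zpow, ← ENNReal.ofReal_mul hα.le]
        apply ENNReal.ofReal_le_ofReal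
        have h1 : (2:ℝ)^k ≤ ‖t‖ := ht.2.1
        have h2 : (0:ℝ) < ‖t‖ := lt_of_lt_of_le (zpow_pos two_pos k) h1
        rw [div_le_iff₀ h2]
        have he : α * 2^(j - k + 3) * 2^k = 4 * α * (2:ℝ)^(j+1) := by
              rw [mul_assoc, ← zpow_add₀ (two_ne_zero (α := ℝ)),
                show j - k + 3 + k = (j+1) + 2 by ring, zpow_add₀ (two_ne_zero (α := ℝ)),
                show ((2:ℝ))^(2:ℤ) = 4 by norm_num]
              ring
        calc 4 * α * (2:ℝ)^(j+1) ≤ α * 2^(j - k + 3) * 2^k := le_of_eq he.symm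
          _ ≤ α * 2^(j - k + 3) * ‖t‖ := by
              have hp : (0:ℝ) < α * 2^(j - k + 3) := by positivity
              nlinarith
      · rw [indicator_of_notMem ht]
        have hempty : (fun s => (s, t)) ⁻¹' (K ∩ (Ann j ×ˢ Ann k)) = ∅ := by
          ext u
          simp only [mem_preimage, mem_inter_iff, mem_empty_iff_false, iff_false, not_and]
          rintro ⟨_, _, htF⟩ ⟨_, htA⟩
          exact ht ⟨htF, htA⟩
        rw [hempty, measure_empty]
    calc (∫⁻ t, μ ((fun s => (s, t)) ⁻¹' (K ∩ (Ann j ×ˢ Ann k))) ∂μ)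
        ≤ ∫⁻ t, (F ∩ Ann k).indicator (fun _ => ENNReal.ofReal α * 2^(j - k + 3)) t ∂μ :=
          lintegral_mono hpt
      _ = ENNReal.ofReal α * 2^(j - k + 3) * μ (F ∩ Ann k) :=
          lintegral_indicator_const (hF.inter (Ann_meas k)) _
  -- summation
  set c := ENNReal.ofReal α with hc
  have hsA : (∑' j : ℤ, μ (E ∩ Ann j)) ≤ μ E := by
    rw [← measure_iUnion
      (fun i j hij => ((Ann_disj hij).mono inter_subset_right inter_subset_right))
      (fun j => hE.inter (Ann_meas j))]
    exact measure_mono (iUnion_subset fun j => inter_subset_left)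
  have hsB : (∑' k : ℤ, μ (F ∩ Ann k)) ≤ μ F := by
    rw [← measure_iUnion
      (fun i j hij => ((Ann_disj hij).mono inter_subset_right inter_subset_right))
      (fun k => hF.inter (Ann_meas k))]
    exact measure_mono (iUnion_subset fun k => inter_subset_left)
  have hW : ∀ p : ℤ × ℤ, (μ.prod μ) (K ∩ (Ann p.1 ×ˢ Ann p.2)) ≤
      (if p.2 - p.1 ≤ n then c * 2^(p.2 - p.1 + 3) * μ (E ∩ Ann p.1) else 0) +
      (if p.2 - p.1 ≤ n then 0 else c * 2^(p.1 - p.2 + 3) * μ (F ∩ Ann p.2)) := by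
    intro p
    split_ifs with h
    · rw [add_zero]; exact hT1 p.1 p.2
    · rw [zero_add]; exact hT2 p.1 p.2
  have hS1 : (∑' p : ℤ × ℤ, (if p.2 - p.1 ≤ n then c * 2^(p.2 - p.1 + 3) * μ (E ∩ Ann p.1) else 0))
      ≤ c * 2^(n+4) * μ E := by
    rw [ENNReal.tsum_prod']
    have hinner : ∀ j : ℤ, (∑' k : ℤ, (if k - j ≤ n then c * 2^(k - j + 3) * μ (E ∩ Ann j) else 0))
        = (c * 2^(n+4)) * μ (E ∩ Ann j) := by
      intro j
      have hterm : ∀ k : ℤ, (if k - j ≤ n then c * 2^(k - j + 3) * μ (E ∩ Ann j) else 0)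
          = (c * μ (E ∩ Ann j) * 2^(3-j)) * (if k ≤ n + j then (2:ℝ≥0∞)^k else 0) := by
        intro k
        by_cases h : k - j ≤ n
        · rw [if_pos h, if_pos (by omega)]
          rw [mul_assoc (c * μ (E ∩ Ann j)), two_zpow_mul, show 3 - j + k = k - j + 3 by ring]
          ring
        · rw [if_neg h, if_neg (by omega), mul_zero]
      rw [tsum_congr hterm, ENNReal.tsum_mul_left, zsum_le (n+j)]
      rw [mul_assoc (c * μ (E ∩ Ann j)), two_zpow_mul, show 3 - j + (n + j + 1) = n + 4 by ring]
      ring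
    rw [tsum_congr hinner, ENNReal.tsum_mul_left]
    exact mul_le_mul_right hsA _
  have hS2 : (∑' p : ℤ × ℤ, (if p.2 - p.1 ≤ n then 0 else c * 2^(p.1 - p.2 + 3) * μ (F ∩ Ann p.2)))
      ≤ c * 2^(3-n) * μ F := by
    rw [ENNReal.tsum_prod', ENNReal.tsum_comm]
    have hinner : ∀ k : ℤ, (∑' j : ℤ, (if k - j ≤ n then 0 else c * 2^(j - k + 3) * μ (F ∩ Ann k)))
        = (c * 2^(3-n)) * μ (F ∩ Ann k) := by
      intro k
      have hterm : ∀ j : ℤ, (if k - j ≤ n then 0 else c * 2^(j - k + 3) * μ (F ∩ Ann k))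
          = (c * μ (F ∩ Ann k) * 2^(3-k)) * (if j ≤ k - n - 1 then (2:ℝ≥0∞)^j else 0) := by
        intro j
        by_cases h : k - j ≤ n
        · rw [if_pos h, if_neg (by omega), mul_zero]
        · rw [if_neg h, if_pos (by omega)]
          rw [mul_assoc (c * μ (F ∩ Ann k)), two_zpow_mul, show 3 - k + j = j - k + 3 by ring]
          ring
      rw [tsum_congr hterm, ENNReal.tsum_mul_left, zsum_le (k-n-1)]
      rw [mul_assoc (c * μ (F ∩ Ann k)), two_zpow_mul, show 3 - k + (k - n - 1 + 1) = 3 - n by ring]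
      ring
    rw [tsum_congr hinner, ENNReal.tsum_mul_left]
    exact mul_le_mul_right hsB _
  -- final arithmetic
  have ha2 : (2:ℝ≥0∞)^n * μ E ≤ (μ E)^(1/2:ℝ) * (μ F)^(1/2:ℝ) := by
    have h1 : ((2:ℝ≥0∞)^n * μ E) * (2^n * μ E) ≤ μ E * μ F := by
      calc ((2:ℝ≥0∞)^n * μ E) * (2^n * μ E) = (2^(2*n) * μ E) * μ E := by
            rw [mul_mul_mul_comm, two_zpow_mul, show n + n = 2*n by ring]
            ring
        _ ≤ μ F * μ E := mul_le_mul_left key1 _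
        _ = μ E * μ F := mul_comm _ _
    calc (2:ℝ≥0∞)^n * μ E = (((2:ℝ≥0∞)^n * μ E) * (2^n * μ E))^(1/2:ℝ) := (sq_half _).symm
      _ ≤ (μ E * μ F)^(1/2:ℝ) := ENNReal.rpow_le_rpow h1 (by norm_num)
      _ = (μ E)^(1/2:ℝ) * (μ F)^(1/2:ℝ) := ENNReal.mul_rpow_of_nonneg _ _ (by norm_num)
  have h4 : ((2:ℝ≥0∞))^(2:ℤ) = 4 := by
    rw [show (2:ℤ) = ((2:ℕ):ℤ) by norm_num, zpow_natCast]; norm_num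
  have hb2 : (2:ℝ≥0∞)^(-n) * μ F ≤ 2 * ((μ E)^(1/2:ℝ) * (μ F)^(1/2:ℝ)) := by
    have h1 : ((2:ℝ≥0∞)^(-n) * μ F) * (2^(-n) * μ F) ≤ 4 * (μ E * μ F) := by
      have e1 : ((2:ℝ≥0∞)^(-n) * μ F) * (2^(-n) * μ F) = 2^(-n + -n) * (μ F * μ F) := by
        rw [mul_mul_mul_comm, two_zpow_mul]
      have e2 : (2:ℝ≥0∞)^(-n + -n) * ((2^(2*n+2) * μ E) * μ F) = 4 * (μ E * μ F) := by
        rw [show ((2:ℝ≥0∞))^(-n + -n) * ((2^(2*n+2) * μ E) * μ F)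
            = (2^(-n + -n) * 2^(2*n+2)) * (μ E * μ F) by ring,
          two_zpow_mul, show -n + -n + (2*n+2) = 2 by ring, h4]
      rw [e1, ← e2]
      exact mul_le_mul_right (mul_le_mul_left key2 _) _
    calc (2:ℝ≥0∞)^(-n) * μ F = (((2:ℝ≥0∞)^(-n) * μ F) * (2^(-n) * μ F))^(1/2:ℝ) :=
          (sq_half _).symm
      _ ≤ (4 * (μ E * μ F))^(1/2:ℝ) := ENNReal.rpow_le_rpow h1 (by norm_num)
      _ = ((4:ℝ≥0∞))^(1/2:ℝ) * (μ E * μ F)^(1/2:ℝ) :=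
          ENNReal.mul_rpow_of_nonneg _ _ (by norm_num)
      _ = 2 * ((μ E)^(1/2:ℝ) * (μ F)^(1/2:ℝ)) := by
          rw [show (4:ℝ≥0∞) = 2*2 by norm_num, sq_half,
            ENNReal.mul_rpow_of_nonneg _ _ (by norm_num : (0:ℝ) ≤ 1/2)]
  have h16 : ((2:ℝ≥0∞))^(4:ℤ) = 16 := by
    rw [show (4:ℤ) = ((4:ℕ):ℤ) by norm_num, zpow_natCast]; norm_num
  have h8 : ((2:ℝ≥0∞))^(3:ℤ) = 8 := by
    rw [show (3:ℤ) = ((3:ℕ):ℤ) by norm_num, zpow_natCast]; norm_num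
  calc (μ.prod μ) K ≤ ∑' p : ℤ × ℤ, (μ.prod μ) (K ∩ (Ann p.1 ×ˢ Ann p.2)) := hsum
    _ ≤ ∑' p : ℤ × ℤ, ((if p.2 - p.1 ≤ n then c * 2^(p.2 - p.1 + 3) * μ (E ∩ Ann p.1) else 0) +
        (if p.2 - p.1 ≤ n then 0 else c * 2^(p.1 - p.2 + 3) * μ (F ∩ Ann p.2))) :=
          ENNReal.tsum_le_tsum hW
    _ = (∑' p : ℤ × ℤ, (if p.2 - p.1 ≤ n then c * 2^(p.2 - p.1 + 3) * μ (E ∩ Ann p.1) else 0)) +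
        (∑' p : ℤ × ℤ, (if p.2 - p.1 ≤ n then 0 else c * 2^(p.1 - p.2 + 3) * μ (F ∩ Ann p.2))) :=
          ENNReal.tsum_add
    _ ≤ c * 2^(n+4) * μ E + c * 2^(3-n) * μ F := add_le_add hS1 hS2
    _ = c * 16 * ((2:ℝ≥0∞)^n * μ E) + c * 8 * ((2:ℝ≥0∞)^(-n) * μ F) := by
        rw [show (n+4 : ℤ) = n + 4 by ring, ← two_zpow_mul n 4, h16,
          show (3-n : ℤ) = 3 + -n by ring, ← two_zpow_mul 3 (-n), h8]
        ring
    _ ≤ c * 16 * ((μ E)^(1/2:ℝ) * (μ F)^(1/2:ℝ))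
        + c * 8 * (2 * ((μ E)^(1/2:ℝ) * (μ F)^(1/2:ℝ))) :=
          add_le_add (mul_le_mul_right ha2 _) (mul_le_mul_right hb2 _)
    _ = ENNReal.ofReal (32 * α) * (μ E)^(1/2:ℝ) * (μ F)^(1/2:ℝ) := by
        rw [ENNReal.ofReal_mul (by norm_num : (0:ℝ) ≤ 32), ← hc]
        rw [show ENNReal.ofReal (32:ℝ) = 32 by simp]
        ring
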